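/- Let V be a finite type, K : V → V → ℝ a symmetric nonnegative weight function with zero diagonal, and L(K) its weighted Laplacian. Fix vertices a, b, i, j ∈ V with K i j > 0 and a real number I. Suppose x, y : V → ℝ satisfy L(K) *ᵥ x = I · (e_b − e_a) and L(K) *ᵥ y = I · (e_i − e_j). Then K a b · (y b − y a) = (K a b / K i j) · (K i j · (x i − x j)); i.e., the current across (a,b) caused by a dipole source of strength I across (i,j) equals K a b/K i j times the current across (i,j) caused by a dipole source of strength I across (a,b). -/

import Mathlib

open Matrix

/-- The weighted Laplacian matrix of a weight function `K`: diagonal entries are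
`∑ k, K i k`, off-diagonal entries are `-K i j`. -/
def weightedLaplacian {V : Type*} [Fintype V] [DecidableEq V] (K : V → V → ℝ) :
    Matrix V V ℝ :=
  Matrix.of fun i j => if i = j then ∑ k, K i k else -K i j

lemma weightedLaplacian_mulVec_apply {V : Type*} [Fintype V] [DecidableEq V]
    (K : V → V → ℝ) (hdiag : ∀ i, K i i = 0) (x : V → ℝ) (u : V) :
    (weightedLaplacian K).mulVec x u = ∑ v, K u v * (x u - x v) := by
  have key : ∀ v, (if u = v then ∑ k, K u k else -K u v) * x v =
      (if u = v then (∑ k, K u k) * x v else 0) + (-(K u v * x v)) := by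
    intro v
    by_cases h : u = v
    · subst h; simp [hdiag]
    · simp [h]
  simp only [weightedLaplacian, mulVec, dotProduct, Matrix.of_apply]
  rw [Finset.sum_congr rfl (fun v _ => key v), Finset.sum_add_distrib,
    Finset.sum_ite_eq (Finset.univ) u (fun v => (∑ k, K u k) * x v)]
  simp only [Finset.mem_univ, if_true, mul_sub]
  rw [Finset.sum_sub_distrib, Finset.sum_neg_distrib]
  ring_nf
  rw [Finset.sum_mul]
  simp only [mul_comm (x u)]
  ring

lemma dot_single_sub {V : Type*} [Fintype V] [DecidableEq V]
    (x : V → ℝ) (I : ℝ) (p q : V) :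
    x ⬝ᵥ (I • (Pi.single p 1 - Pi.single q 1) : V → ℝ) = I * (x p - x q) := by
  simp [dotProduct, Pi.single_apply, mul_sub, sub_mul, Finset.mul_sum,
    Finset.sum_sub_distrib, mul_comm, mul_assoc, mul_left_comm]

lemma weightedLaplacian_symm {V : Type*} [Fintype V] [DecidableEq V]
    (K : V → V → ℝ) (hsymm : ∀ i j, K i j = K j i) :
    (weightedLaplacian K)ᵀ = weightedLaplacian K := by
  ext u v
  simp only [weightedLaplacian, transpose_apply, Matrix.of_apply]
  by_cases h : u = v
  · simp [h]
  · simp [h, Ne.symm h, hsymm u v]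

lemma lap_reciprocity {V : Type*} [Fintype V] [DecidableEq V]
    (K : V → V → ℝ) (hsymm : ∀ i j, K i j = K j i) (x y : V → ℝ) :
    x ⬝ᵥ (weightedLaplacian K).mulVec y = y ⬝ᵥ (weightedLaplacian K).mulVec x := by
  rw [Matrix.dotProduct_mulVec, ← Matrix.mulVec_transpose,
    weightedLaplacian_symm K hsymm, dotProduct_comm]

lemma lap_kernel_eq {V : Type*} [Fintype V] [DecidableEq V]
    (K : V → V → ℝ) (hsymm : ∀ i j, K i j = K j i) (hnonneg : ∀ i j, 0 ≤ K i j)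
    (hdiag : ∀ i, K i i = 0) (x : V → ℝ)
    (h : (weightedLaplacian K).mulVec x = 0) {u v : V} (huv : 0 < K u v) :
    x u = x v := by
  have hq : x ⬝ᵥ (weightedLaplacian K).mulVec x = 0 := by
    rw [h]; simp
  have hform : x ⬝ᵥ (weightedLaplacian K).mulVec x
      = ∑ p, ∑ q, K p q * (x p * (x p - x q)) := by
    simp only [dotProduct, weightedLaplacian_mulVec_apply K hdiag]
    refine Finset.sum_congr rfl fun p _ => ?_
    rw [Finset.mul_sum]
    refine Finset.sum_congr rfl fun q _ => ?_
    ring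
  have hswap : ∑ p, ∑ q, K p q * x q ^ 2 = ∑ p, ∑ q, K p q * x p ^ 2 := by
    rw [Finset.sum_comm]
    refine Finset.sum_congr rfl fun p _ => Finset.sum_congr rfl fun q _ => ?_
    rw [hsymm q p]
  have hS : ∑ p, ∑ q, K p q * (x p - x q) ^ 2 = 0 := by
    have expand : ∀ p q : V, K p q * (x p - x q) ^ 2 =
        2 * (K p q * (x p * (x p - x q)))
          - (K p q * x p ^ 2 - K p q * x q ^ 2) := by
      intro p q; ring
    calc ∑ p, ∑ q, K p q * (x p - x q) ^ 2
        = 2 * (∑ p, ∑ q, K p q * (x p * (x p - x q)))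
          - ((∑ p, ∑ q, K p q * x p ^ 2) - (∑ p, ∑ q, K p q * x q ^ 2)) := by
          simp only [expand, Finset.sum_sub_distrib, Finset.mul_sum]
      _ = 0 := by rw [hswap, ← hform, hq]; ring
  have hterm : K u v * (x u - x v) ^ 2 = 0 := by
    have hnn : ∀ p ∈ Finset.univ, (0:ℝ) ≤ ∑ q, K p q * (x p - x q) ^ 2 := by
      intro p _
      exact Finset.sum_nonneg fun q _ => mul_nonneg (hnonneg p q) (sq_nonneg _)
    have h1 : ∑ q, K u q * (x u - x q) ^ 2 = 0 :=
      (Finset.sum_eq_zero_iff_of_nonneg hnn).mp hS u (Finset.mem_univ u)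
    have hnn2 : ∀ q ∈ Finset.univ, (0:ℝ) ≤ K u q * (x u - x q) ^ 2 :=
      fun q _ => mul_nonneg (hnonneg u q) (sq_nonneg _)
    exact (Finset.sum_eq_zero_iff_of_nonneg hnn2).mp h1 v (Finset.mem_univ v)
  have := (mul_eq_zero.mp hterm).resolve_left (ne_of_gt huv)
  have := pow_eq_zero_iff (n := 2) (by norm_num) |>.mp this
  linarith [sub_eq_zero.mp this]

/-- The current across `(a,b)` caused by a dipole source of strength `I` across `(i,j)`
equals `K a b / K i j` times the current across `(i,j)` caused by a dipole source of
strength `I` across `(a,b)`. -/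
theorem dipole_current_symmetry
    {V : Type*} [Fintype V] [DecidableEq V] (K : V → V → ℝ)
    (hsymm : ∀ i j, K i j = K j i) (hnonneg : ∀ i j, 0 ≤ K i j)
    (hdiag : ∀ i, K i i = 0)
    (a b i j : V) (hKij : 0 < K i j) (I : ℝ)
    (x y : V → ℝ)
    (hx : (weightedLaplacian K).mulVec x = I • (Pi.single b 1 - Pi.single a 1))
    (hy : (weightedLaplacian K).mulVec y = I • (Pi.single i 1 - Pi.single j 1)) :
    K a b * (y b - y a) = (K a b / K i j) * (K i j * (x i - x j)) := by
  have hKij' : K i j ≠ 0 := ne_of_gt hKij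
  have hRHS : (K a b / K i j) * (K i j * (x i - x j)) = K a b * (x i - x j) := by
    field_simp
  rw [hRHS]
  rcases eq_or_ne I 0 with hI | hI
  · subst hI
    simp only [zero_smul] at hx hy
    have hxij : x i = x j := lap_kernel_eq K hsymm hnonneg hdiag x hx hKij
    rw [hxij, sub_self, mul_zero]
    by_cases hab : K a b = 0
    · rw [hab, zero_mul]
    · have hab' : 0 < K a b := lt_of_le_of_ne (hnonneg a b) (Ne.symm hab)
      have : y a = y b := lap_kernel_eq K hsymm hnonneg hdiag y hy hab'
      rw [this, sub_self, mul_zero]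
  · have hr := lap_reciprocity K hsymm x y
    rw [hx, hy, dot_single_sub, dot_single_sub] at hr
    have : x i - x j = y b - y a := mul_left_cancel₀ hI hr
    rw [this]
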